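/- Let Φ : M_d(ℂ) → M_d(ℂ) be a linear map that is completely positive (there exist matrices K_a with Φ(X) = ∑_a K_a X K_aᴴ for all X), trace-preserving, and satisfies Φ(|i⟩⟨i|) = |i⟩⟨i| for every i ∈ {0,…,d−1}. Then there exist complex numbers α_{ij} with |1 + α_{ij}| ≤ 1 such that for every ρ ∈ M_d(ℂ), Φ(ρ) = ∑_i ρ_{ii}|i⟩⟨i| + ∑_{i≠j} ρ_{ij}(1+α_{ij})|i⟩⟨j|; that is, Φ(ρ)_{ii} = ρ_{ii} for all i and Φ(ρ)_{ij} = (1+α_{ij})ρ_{ij} with |1+α_{ij}| ≤ 1 for all i ≠ j. -/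

import Mathlib

open Matrix ComplexOrder

/-- **Structure of CPTP maps fixing all core projectors** (Lewenstein et al. 2020):
if a completely positive trace-preserving map `Φ` satisfies `Φ(|i⟩⟨i|) = |i⟩⟨i|` for
every `i`, then there exist `α_{ij} ∈ ℂ` with `|1 + α_{ij}| ≤ 1` such that
`Φ(ρ) = ∑ᵢ ρ_{ii}|i⟩⟨i| + ∑_{i≠j} ρ_{ij}(1+α_{ij})|i⟩⟨j|` for every `ρ`. -/
theorem cptp_fixing_diagonal_projectors_is_dephasing {d : ℕ}
    (Φ : Matrix (Fin d) (Fin d) ℂ →ₗ[ℂ] Matrix (Fin d) (Fin d) ℂ)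
    (hCP : ∃ (n : ℕ) (K : Fin n → Matrix (Fin d) (Fin d) ℂ),
      ∀ X : Matrix (Fin d) (Fin d) ℂ, Φ X = ∑ a, K a * X * (K a)ᴴ)
    (hTP : ∀ X : Matrix (Fin d) (Fin d) ℂ, (Φ X).trace = X.trace)
    (hfix : ∀ i : Fin d,
      Φ (Matrix.single i i 1) = Matrix.single i i 1) :
    ∃ α : Fin d → Fin d → ℂ,
      (∀ i j, i ≠ j → ‖1 + α i j‖ ≤ 1) ∧
      ∀ ρ : Matrix (Fin d) (Fin d) ℂ,
        (∀ i, Φ ρ i i = ρ i i) ∧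
        (∀ i j, i ≠ j → Φ ρ i j = (1 + α i j) * ρ i j) := by
  obtain ⟨n, K, hK⟩ := hCP
  -- the key entrywise computation of Φ(E_ii) at (j,j)
  have hentry : ∀ (i j : Fin d),
      Φ (Matrix.single i i 1) j j
        = ∑ a, (Complex.normSq (K a j i) : ℂ) := by
    intro i j
    rw [hK, Matrix.sum_apply]
    congr 1; ext a
    rw [Matrix.mul_apply]
    simp [Matrix.conjTranspose_apply, Matrix.mul_apply, Matrix.single,
      Finset.sum_mul, ite_and, Finset.sum_ite_eq', Complex.mul_conj]
  -- off-diagonal entries of each Kraus operator vanish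
  have hoff : ∀ (a : Fin n) (j i : Fin d), j ≠ i → K a j i = 0 := by
    intro a j i hji
    have h := hentry i j
    rw [hfix i] at h
    rw [Matrix.single_apply_of_row_ne (Ne.symm hji)] at h
    have h' : ∑ a, Complex.normSq (K a j i) = 0 := by
      have := h.symm
      push_cast at this
      exact_mod_cast congrArg Complex.re this
    have hz : Complex.normSq (K a j i) = 0 := by
      have := (Finset.sum_eq_zero_iff_of_nonneg
        (fun b _ => Complex.normSq_nonneg (K b j i))).mp h' a (Finset.mem_univ a)
      exact this
    exact Complex.normSq_eq_zero.mp hz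
  -- each K a is diagonal
  have hdiag : ∀ a : Fin n, K a = Matrix.diagonal (fun i => K a i i) := by
    intro a
    ext j k
    by_cases h : j = k
    · subst h; simp [Matrix.diagonal]
    · simp [Matrix.diagonal, h, hoff a j k h]
  set c : Fin n → Fin d → ℂ := fun a i => K a i i with hc
  set lam : Fin d → Fin d → ℂ := fun i j => ∑ a, c a i * (starRingEnd ℂ) (c a j) with hlam
  -- general entry formula
  have hPhi : ∀ (ρ : Matrix (Fin d) (Fin d) ℂ) (i j : Fin d),
      Φ ρ i j = lam i j * ρ i j := by
    intro ρ i j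
    rw [hK, Matrix.sum_apply, hlam]
    simp only [Finset.sum_mul]
    congr 1; ext a
    rw [hdiag a]
    rw [Matrix.diagonal_conjTranspose, Matrix.mul_diagonal, Matrix.diagonal_mul]
    simp [hc, Pi.star_apply]
    ring
  -- diagonal of lam is 1
  have hlam1 : ∀ i, lam i i = 1 := by
    intro i
    have h := hPhi (Matrix.single i i 1) i i
    rw [hfix i] at h
    simpa [Matrix.single_apply_same] using h.symm
  -- Cauchy–Schwarz bound
  have hbound : ∀ i j, ‖lam i j‖ ≤ 1 := by
    intro i j
    set u : EuclideanSpace ℂ (Fin n) := WithLp.toLp 2 (fun a => c a j) with hu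
    set v : EuclideanSpace ℂ (Fin n) := WithLp.toLp 2 (fun a => c a i) with hv
    have hinner : inner ℂ u v = lam i j := by
      simp [hlam, PiLp.inner_apply, hu, hv, mul_comm]
    have hnorm : ∀ (k : Fin d) (w : EuclideanSpace ℂ (Fin n)),
        (∀ a, w a = c a k) → ‖w‖ = 1 := by
      intro k w hw
      have h1 : (inner ℂ w w : ℂ) = lam k k := by
        rw [PiLp.inner_apply]
        simp [hlam, PiLp.inner_apply, hw, mul_comm, Complex.mul_conj']
      rw [hlam1 k] at h1
      have h2 : (‖w‖ : ℂ)^2 = 1 :=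
        (inner_self_eq_norm_sq_to_K (𝕜 := ℂ) w).symm.trans h1
      have h3 : ‖w‖^2 = 1 := by exact_mod_cast h2
      nlinarith [norm_nonneg w]
    have hcs := norm_inner_le_norm (𝕜 := ℂ) u v
    rw [hinner, hnorm j u (fun a => rfl), hnorm i v (fun a => rfl)] at hcs
    simpa using hcs
  refine ⟨fun i j => lam i j - 1, ?_, ?_⟩
  · intro i j _
    rw [add_sub_cancel]
    exact hbound i j
  · intro ρ
    refine ⟨fun i => ?_, fun i j _ => ?_⟩
    · rw [hPhi ρ i i, hlam1 i, one_mul]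
    · rw [hPhi ρ i j, add_sub_cancel]
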